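/- Let G be a finite simple graph containing m pairwise vertex-disjoint d-bounded edges. Then a random game on G has no pure Nash equilibrium with probability at least 1 − exp(−m·(1/8)^{2^{2d−2}}). -/

import Mathlib

open scoped Classical
open Finset

/-- Best-response tables of a graphical game with binary strategies on vertex set `V`:
player `v`'s table assigns a best response `ω v τ ∈ {0,1}` to each (masked) strategy
profile `τ`. Only the values at profiles vanishing outside the neighborhood of `v` are
ever read, so under the uniform measure the read entries are i.i.d. uniform on `{0,1}`. -/
abbrev Tables (V : Type) := V → (V → Bool) → Bool

/-- Restriction of a strategy profile to the neighborhood of `v` in `G`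
(strategies outside the neighborhood are replaced by `false`). -/
noncomputable def maskN {V : Type} (G : SimpleGraph V) (v : V) (σ : V → Bool) : V → Bool :=
  fun u => if G.Adj v u then σ u else false

/-- `σ` is a pure Nash equilibrium of the game on `G` with tables `ω`:
every player plays a best response to the strategies of its neighbors. -/
def isPNE {V : Type} (G : SimpleGraph V) (ω : Tables V) (σ : V → Bool) : Prop :=
  ∀ v, σ v = ω v (maskN G v σ)

/-- Probability of a table event under the uniform measure on best-response tables
(the random game on a fixed graph). -/
noncomputable def probT (V : Type) [Fintype V] [DecidableEq V] (A : Tables V → Prop) : ℝ :=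
  (∑ ω : Tables V, if A ω then (1 : ℝ) else 0) / (Fintype.card (Tables V) : ℝ)

/-- The degree of a vertex `v` in `G`. -/
noncomputable def degOf {V : Type} [Fintype V] (G : SimpleGraph V) (v : V) : ℕ :=
  (univ.filter fun u => G.Adj v u).card

set_option linter.unusedSectionVars false

/-! ### Auxiliary counting lemmas -/

section indep
variable {ι T : Type} [Fintype ι] [DecidableEq ι] [Fintype T]

/-- Combine two table assignments, taking `ω` on coordinates satisfying `p` and `τ` elsewhere. -/
noncomputable def mixf (p : ι → Prop) (ω τ : ι → T) : ι → T := fun i => if p i then ω i else τ i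

lemma mixf_mixf (p : ι → Prop) (a b : ι → T) : mixf p (mixf p a b) (mixf p b a) = a := by
  funext i; simp only [mixf]; split <;> rfl

/-- Independence of events depending on disjoint sets of coordinates (counting form). -/
lemma card_indep (p : ι → Prop) (B C : (ι → T) → Prop)
    (hB : ∀ ω τ, B (mixf p ω τ) ↔ B ω)
    (hC : ∀ ω τ, C (mixf p ω τ) ↔ C τ) :
    Fintype.card {ω // B ω ∧ C ω} * Fintype.card (ι → T) =
      Fintype.card {ω // B ω} * Fintype.card {ω // C ω} := by
  rw [← Fintype.card_prod, ← Fintype.card_prod]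
  refine Fintype.card_congr ?_
  exact {
    toFun := fun x => (⟨mixf p x.1.1 x.2, (hB _ _).2 x.1.2.1⟩,
                       ⟨mixf p x.2 x.1.1, (hC _ _).2 x.1.2.2⟩)
    invFun := fun x => (⟨mixf p x.1.1 x.2.1, ⟨(hB _ _).2 x.1.2, (hC _ _).2 x.2.2⟩⟩,
                        mixf p x.2.1 x.1.1)
    left_inv := by
      rintro ⟨⟨ω, hω⟩, τ⟩
      simp only [Prod.mk.injEq, Subtype.mk.injEq]
      exact ⟨mixf_mixf p ω τ, mixf_mixf p τ ω⟩
    right_inv := by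
      rintro ⟨⟨a, ha⟩, ⟨b, hb⟩⟩
      simp only [Prod.mk.injEq, Subtype.mk.injEq]
      exact ⟨mixf_mixf p a b, mixf_mixf p b a⟩ }

end indep

/-- Counting Boolean functions with forced values on a subset of the domain. -/
lemma card_forced {D : Type} [Fintype D] [DecidableEq D] (p : D → Prop) (h : D → Bool) :
    Nat.card {t : D → Bool // ∀ f, p f → t f = h f} * 2 ^ (Nat.card {f // p f}) =
      2 ^ (Nat.card D) := by
  simp only [Nat.card_eq_fintype_card]
  have e : {t : D → Bool // ∀ f, p f → t f = h f} ≃ ({f // ¬ p f} → Bool) :=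
    { toFun := fun t f => t.1 f.1
      invFun := fun g => ⟨fun f => if hp : p f then h f else g ⟨f, hp⟩,
        fun f hf => by simp [hf]⟩
      left_inv := by
        rintro ⟨t, ht⟩
        ext f
        by_cases hp : p f <;> simp [hp, ht f]
      right_inv := by
        intro g; funext f; simp [f.2] }
  rw [Fintype.card_congr e, Fintype.card_fun, Fintype.card_bool, ← pow_add,
    ← Fintype.card_sum, Fintype.card_congr ((Equiv.sumComm _ _).trans (Equiv.sumCompl p))]

section coord
variable {ι T : Type} [Fintype ι] [DecidableEq ι] [Fintype T]

/-- Counting form of the probability of an event depending on a single coordinate. -/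
lemma card_coord (u : ι) (Q : T → Prop) :
    Fintype.card {ω : ι → T // Q (ω u)} * Fintype.card T =
      Fintype.card {t // Q t} * Fintype.card (ι → T) := by
  have E : {ω : ι → T // Q (ω u)} ≃ {t // Q t} × ({j : ι // j ≠ u} → T) :=
    { toFun := fun ω => (⟨ω.1 u, ω.2⟩, fun j => ω.1 j.1)
      invFun := fun x => ⟨fun i => if h : i = u then x.1.1 else x.2 ⟨i, h⟩,
        by simpa using x.1.2⟩
      left_inv := by
        rintro ⟨ω, hω⟩
        ext i
        by_cases h : i = u <;> simp [h]
      right_inv := by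
        rintro ⟨⟨t, ht⟩, g⟩
        simp only [Prod.mk.injEq, Subtype.mk.injEq]
        constructor
        · simp
        · funext j; simp [j.2] }
  have h2 : Fintype.card (ι → T) = Fintype.card T * Fintype.card ({j : ι // j ≠ u} → T) :=
    (Fintype.card_congr (Equiv.funSplitAt u T)).trans (Fintype.card_prod _ _)
  rw [Fintype.card_congr E, Fintype.card_prod, h2]
  ring
end coord

/-! ### Basic properties of `probT` -/

section prob
variable {V : Type} [Fintype V] [DecidableEq V]

lemma probT_eq (A : Tables V → Prop) :
    probT V A = (Fintype.card {ω // A ω} : ℝ) / (Fintype.card (Tables V) : ℝ) := by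
  rw [probT, Finset.sum_boole, Fintype.card_subtype]

lemma cardTables_pos : 0 < (Fintype.card (Tables V) : ℝ) := by
  exact_mod_cast Fintype.card_pos

lemma probT_nonneg (A : Tables V → Prop) : 0 ≤ probT V A := by
  rw [probT_eq]; positivity

lemma probT_mono {A B : Tables V → Prop} (h : ∀ ω, A ω → B ω) : probT V A ≤ probT V B := by
  rw [probT_eq, probT_eq]
  gcongr
  exact_mod_cast Fintype.card_subtype_mono _ _ h

lemma probT_compl (A : Tables V → Prop) : probT V (fun ω => ¬ A ω) = 1 - probT V A := by
  have h : probT V (fun ω => ¬ A ω) + probT V A = 1 := by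
    rw [probT, probT, ← add_div, ← Finset.sum_add_distrib]
    rw [div_eq_one_iff_eq (ne_of_gt (cardTables_pos (V := V)))]
    have h1 : ∑ _ω : Tables V, (1:ℝ) = (Fintype.card (Tables V) : ℝ) := by
      rw [Finset.sum_const, card_univ, nsmul_eq_mul, mul_one]
    refine Eq.trans (Finset.sum_congr rfl fun ω _ => ?_) h1
    by_cases h : A ω <;> simp [h]
  linarith

lemma probT_iff {A B : Tables V → Prop} (h : ∀ ω, A ω ↔ B ω) : probT V A = probT V B := by
  unfold probT; congr 1; apply Finset.sum_congr rfl; intro ω _; simp [h ω]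

lemma probT_or {A B : Tables V → Prop} (h : ∀ ω, ¬ (A ω ∧ B ω)) :
    probT V (fun ω => A ω ∨ B ω) = probT V A + probT V B := by
  rw [probT, probT, probT, ← add_div, ← Finset.sum_add_distrib]
  congr 1
  refine Finset.sum_congr rfl fun ω _ => ?_
  by_cases hA : A ω <;> by_cases hB : B ω
  · exact absurd ⟨hA, hB⟩ (h ω)
  all_goals simp [hA, hB]

/-- Probabilistic independence of events depending on disjoint sets of players. -/
lemma probT_indep (p : V → Prop) (B C : Tables V → Prop)
    (hB : ∀ ω τ, B (mixf p ω τ) ↔ B ω)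
    (hC : ∀ ω τ, C (mixf p ω τ) ↔ C τ) :
    probT V (fun ω => B ω ∧ C ω) = probT V B * probT V C := by
  have hN : (0:ℝ) < (Fintype.card (Tables V) : ℝ) := cardTables_pos
  rw [probT_eq, probT_eq, probT_eq, div_mul_div_comm,
    div_eq_div_iff (ne_of_gt hN) (by positivity)]
  have h2 : (Fintype.card {ω // B ω ∧ C ω})
        * (Fintype.card (Tables V) * Fintype.card (Tables V))
      = Fintype.card {ω // B ω} * Fintype.card {ω // C ω} * Fintype.card (Tables V) := by
    rw [← mul_assoc, card_indep p B C hB hC]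
  have h3 : ((Fintype.card {ω // B ω ∧ C ω} : ℝ))
        * ((Fintype.card (Tables V) : ℝ) * (Fintype.card (Tables V) : ℝ))
      = (Fintype.card {ω // B ω} : ℝ) * (Fintype.card {ω // C ω} : ℝ)
        * (Fintype.card (Tables V) : ℝ) := by exact_mod_cast h2
  convert h3 using 3
  congr 1
  exact Subsingleton.elim _ _

lemma probT_true : probT V (fun _ => True) = 1 := by
  rw [probT, div_eq_one_iff_eq (ne_of_gt (cardTables_pos (V := V)))]
  have h1 : ∑ _ω : Tables V, (1:ℝ) = (Fintype.card (Tables V) : ℝ) := by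
    rw [Finset.sum_const, card_univ, nsmul_eq_mul, mul_one]
  exact Eq.trans (Finset.sum_congr rfl fun ω _ => if_pos trivial) h1

lemma probT_le_one (A : Tables V → Prop) : probT V A ≤ 1 := by
  rw [probT_eq, div_le_one cardTables_pos]
  exact_mod_cast Fintype.card_subtype_le _

end prob

/-! ### The unstable-edge event -/

section game
variable {V : Type} [Fintype V] [DecidableEq V]

/-- `f` is supported on the neighborhood of `u` in `G`. -/
def suppN (G : SimpleGraph V) (u : V) (f : V → Bool) : Prop := ∀ x, ¬ G.Adj u x → f x = false

/-- Player `u`'s table always copies the strategy of `w`. -/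
def P0 (G : SimpleGraph V) (u w : V) (t : (V → Bool) → Bool) : Prop :=
  ∀ f, suppN G u f → t f = f w

/-- Player `u`'s table always negates the strategy of `w`. -/
def P1 (G : SimpleGraph V) (u w : V) (t : (V → Bool) → Bool) : Prop :=
  ∀ f, suppN G u f → t f = ! f w

/-- The edge `(u,v)` plays "matching pennies" (in one of the two orientations). -/
def Ae2 (G : SimpleGraph V) (u v : V) (t s : (V → Bool) → Bool) : Prop :=
  (P0 G u v t ∧ P1 G v u s) ∨ (P1 G u v t ∧ P0 G v u s)

/-- The event that the edge `e` is unstable. -/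
def Ae (G : SimpleGraph V) (e : V × V) (ω : Tables V) : Prop :=
  Ae2 G e.1 e.2 (ω e.1) (ω e.2)

lemma suppN_maskN (G : SimpleGraph V) (u : V) (σ : V → Bool) : suppN G u (maskN G u σ) := by
  intro x hx; simp [maskN, hx]

lemma maskN_apply_adj (G : SimpleGraph V) {u w : V} (h : G.Adj u w) (σ : V → Bool) :
    maskN G u σ w = σ w := by simp [maskN, h]

/-- An unstable edge destroys all pure Nash equilibria. -/
lemma noPNE {G : SimpleGraph V} {e : V × V} (hadj : G.Adj e.1 e.2) {ω : Tables V}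
    (hA : Ae G e ω) : ¬ ∃ σ, isPNE G ω σ := by
  rintro ⟨σ, hσ⟩
  obtain ⟨u, v⟩ := e
  have hu : σ u = ω u (maskN G u σ) := hσ u
  have hv : σ v = ω v (maskN G v σ) := hσ v
  rcases hA with ⟨h1, h2⟩ | ⟨h1, h2⟩
  · have e1 : σ u = σ v := by
      rw [hu, h1 _ (suppN_maskN G u σ), maskN_apply_adj G hadj]
    have e2 : σ v = ! σ u := by
      rw [hv, h2 _ (suppN_maskN G v σ), maskN_apply_adj G hadj.symm]
    rw [e1] at e2; simp at e2
  · have e1 : σ u = ! σ v := by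
      rw [hu, h1 _ (suppN_maskN G u σ), maskN_apply_adj G hadj]
    have e2 : σ v = σ u := by
      rw [hv, h2 _ (suppN_maskN G v σ), maskN_apply_adj G hadj.symm]
    rw [e2] at e1; simp at e1

lemma P0_P1_false {G : SimpleGraph V} {u w : V} {t : (V → Bool) → Bool}
    (h0 : P0 G u w t) (h1 : P1 G u w t) : False := by
  have hs : suppN G u (fun _ => false) := fun x _ => rfl
  have := (h0 _ hs).symm.trans (h1 _ hs)
  simp at this

lemma card_suppN (G : SimpleGraph V) (u : V) :
    Nat.card {f : V → Bool // suppN G u f} = 2 ^ degOf G u := by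
  simp only [Nat.card_eq_fintype_card]
  have e : {f : V → Bool // suppN G u f} ≃ ({x // G.Adj u x} → Bool) :=
    { toFun := fun f x => f.1 x.1
      invFun := fun g => ⟨fun x => if h : G.Adj u x then g ⟨x, h⟩ else false,
        fun x hx => by simp [hx]⟩
      left_inv := by
        rintro ⟨f, hf⟩; ext x
        by_cases h : G.Adj u x
        · simp [h]
        · simp [h, hf x h]
      right_inv := by intro g; funext x; simp [x.2] }
  rw [Fintype.card_congr e, Fintype.card_fun, Fintype.card_bool, degOf, Fintype.card_subtype]

/-- Probability of an event depending on a single player's table. -/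
lemma probT_coord (u : V) (Q : ((V → Bool) → Bool) → Prop) :
    probT V (fun ω => Q (ω u)) * (Fintype.card ((V → Bool) → Bool) : ℝ)
      = (Fintype.card {t // Q t} : ℝ) := by
  have hN : (0:ℝ) < (Fintype.card (Tables V) : ℝ) := cardTables_pos
  have hcc' : (Fintype.card {ω : Tables V // Q (ω u)} : ℝ)
        * (Fintype.card ((V → Bool) → Bool) : ℝ)
      = (Fintype.card {t // Q t} : ℝ) * (Fintype.card (Tables V) : ℝ) := by
    exact_mod_cast card_coord (T := (V → Bool) → Bool) u Q
  rw [probT_eq, div_mul_eq_mul_div, div_eq_iff (ne_of_gt hN)]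
  exact hcc'

/-- Probability of an event depending on a single player's table, computed from a
count of the tables realizing it. -/
lemma probT_coord_val (u : V) (Q : ((V → Bool) → Bool) → Prop) (k : ℕ)
    (hk' : Nat.card {t // Q t} * 2 ^ k = 2 ^ Nat.card (V → Bool)) :
    probT V (fun ω => Q (ω u)) = (1 / 2 : ℝ) ^ k := by
  have hk : Fintype.card {t // Q t} * 2 ^ k = 2 ^ Fintype.card (V → Bool) := by
    simpa only [Nat.card_eq_fintype_card] using hk'
  have hQ := probT_coord u Q
  have hTe : (Fintype.card ((V → Bool) → Bool)) = 2 ^ Fintype.card (V → Bool) := by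
    rw [Fintype.card_fun, Fintype.card_bool]
  have hT : (0:ℝ) < (Fintype.card ((V → Bool) → Bool) : ℝ) := by
    exact_mod_cast Fintype.card_pos
  have hreal : (Fintype.card {t // Q t} : ℝ) * 2 ^ k
      = (Fintype.card ((V → Bool) → Bool) : ℝ) := by
    rw [hTe]
    exact_mod_cast hk
  have hcQ : (Fintype.card {t // Q t} : ℝ) ≠ 0 := by
    intro h0
    rw [h0, zero_mul] at hreal
    exact (ne_of_gt hT) hreal.symm
  rw [← hreal] at hQ
  have h3 : (Fintype.card {t // Q t} : ℝ)
      * ((probT V (fun ω => Q (ω u))) * 2 ^ k)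
      = (Fintype.card {t // Q t} : ℝ) * 1 := by
    linear_combination hQ
  have h4 := mul_left_cancel₀ hcQ h3
  have h2k : (0:ℝ) < (2:ℝ) ^ k := by positivity
  have hx := (eq_div_iff (ne_of_gt h2k)).2 h4
  rw [div_pow, one_pow]
  exact hx

/-- Probability that a single player's table is forced on its neighborhood profiles. -/
lemma probT_forced (G : SimpleGraph V) (u : V) (h : (V → Bool) → Bool) :
    probT V (fun ω => ∀ f, suppN G u f → ω u f = h f) = (1 / 2 : ℝ) ^ (2 ^ degOf G u) := by
  refine probT_coord_val u (fun t => ∀ f, suppN G u f → t f = h f) (2 ^ degOf G u) ?_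
  have hcf := card_forced (suppN G u) h
  rw [card_suppN] at hcf
  exact hcf

lemma mixf_ne {p : V → Prop} {ω τ : Tables V} {i : V} (h : p i) : mixf p ω τ i = ω i := by
  simp [mixf, h]

lemma mixf_nn {p : V → Prop} {ω τ : Tables V} {i : V} (h : ¬ p i) : mixf p ω τ i = τ i := by
  simp [mixf, h]

/-- The probability that an edge is unstable. -/
lemma probT_Ae (G : SimpleGraph V) {u v : V} (hadj : G.Adj u v) :
    probT V (Ae G (u, v)) =
      2 * ((1 / 2 : ℝ) ^ (2 ^ degOf G u) * (1 / 2 : ℝ) ^ (2 ^ degOf G v)) := by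
  have hne : u ≠ v := hadj.ne
  have key : ∀ (h1 : (V → Bool) → Bool) (h2 : (V → Bool) → Bool),
      probT V (fun ω => (∀ f, suppN G u f → ω u f = h1 f) ∧ (∀ f, suppN G v f → ω v f = h2 f))
        = (1 / 2 : ℝ) ^ (2 ^ degOf G u) * (1 / 2 : ℝ) ^ (2 ^ degOf G v) := by
    intro h1 h2
    rw [probT_indep (fun i => i = u)
      (fun ω => ∀ f, suppN G u f → ω u f = h1 f)
      (fun ω => ∀ f, suppN G v f → ω v f = h2 f)
      (fun ω τ => by simp [mixf])
      (fun ω τ => by simp [mixf, Ne.symm hne]),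
      probT_forced, probT_forced]
  have hsplit : probT V (Ae G (u, v)) =
      probT V (fun ω => (∀ f, suppN G u f → ω u f = f v) ∧ (∀ f, suppN G v f → ω v f = (! f u))) +
      probT V (fun ω => (∀ f, suppN G u f → ω u f = (! f v)) ∧ (∀ f, suppN G v f → ω v f = f u)) := by
    refine Eq.trans (probT_iff fun ω => Iff.rfl) (probT_or ?_)
    rintro ω ⟨⟨a, -⟩, ⟨c, -⟩⟩
    exact P0_P1_false a c
  rw [hsplit, key (fun f => f v) (fun f => (! f u)), key (fun f => (! f v)) (fun f => f u)]
  ring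

/-- Independence over a family of vertex-disjoint edges. -/
lemma probT_prod (G : SimpleGraph V) (s : Finset (V × V))
    (hdisj : ∀ e ∈ s, ∀ f ∈ s, e ≠ f →
      e.1 ≠ f.1 ∧ e.1 ≠ f.2 ∧ e.2 ≠ f.1 ∧ e.2 ≠ f.2) :
    probT V (fun ω => ∀ e ∈ s, ¬ Ae G e ω) = ∏ e ∈ s, (1 - probT V (Ae G e)) := by
  induction s using Finset.induction_on with
  | empty =>
    have h0 : probT V (fun ω => ∀ e ∈ (∅ : Finset (V × V)), ¬ Ae G e ω)
        = probT V (fun _ => True) := probT_iff fun ω => by simp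
    rw [h0, probT_true, Finset.prod_empty]
  | @insert e0 s he0 ih =>
    have hd' : ∀ e ∈ s, ∀ f ∈ s, e ≠ f →
        e.1 ≠ f.1 ∧ e.1 ≠ f.2 ∧ e.2 ≠ f.1 ∧ e.2 ≠ f.2 := fun e he f hf =>
      hdisj e (mem_insert_of_mem he) f (mem_insert_of_mem hf)
    set p : V → Prop := fun i => i ≠ e0.1 ∧ i ≠ e0.2 with hp
    have hstep : probT V (fun ω => ∀ e ∈ insert e0 s, ¬ Ae G e ω)
        = probT V (fun ω => (∀ e ∈ s, ¬ Ae G e ω) ∧ ¬ Ae G e0 ω) := by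
      refine probT_iff fun ω => ?_
      simp only [mem_insert]
      constructor
      · intro h; exact ⟨fun e he => h e (Or.inr he), h e0 (Or.inl rfl)⟩
      · rintro ⟨h1, h2⟩ e (rfl | he)
        · exact h2
        · exact h1 e he
    rw [hstep, probT_indep p _ _ ?_ ?_, ih hd', probT_compl, Finset.prod_insert he0]
    · ring
    · intro ω τ
      refine forall_congr' fun e => forall_congr' fun he => not_congr ?_
      have h1 : p e.1 := by
        have := hdisj e (mem_insert_of_mem he) e0 (mem_insert_self e0 s)
          (by rintro rfl; exact he0 he)
        exact ⟨this.1, this.2.1⟩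
      have h2 : p e.2 := by
        have := hdisj e (mem_insert_of_mem he) e0 (mem_insert_self e0 s)
          (by rintro rfl; exact he0 he)
        exact ⟨this.2.2.1, this.2.2.2⟩
      simp only [Ae]
      rw [mixf_ne h1, mixf_ne h2]
    · intro ω τ
      refine not_congr ?_
      have h1 : ¬ p e0.1 := by simp [hp]
      have h2 : ¬ p e0.2 := by simp [hp]
      simp only [Ae]
      rw [mixf_nn h1, mixf_nn h2]

end game

/-- **Vertex-disjoint `d`-bounded edges.** If `G` contains `m` pairwise vertex-disjoint
edges whose endpoints all have degree at most `d`, then a random game on `G` has no pure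
Nash equilibrium with probability at least `1 - exp(-m (1/8)^{2^{2d-2}})`. -/
theorem stmt7 {V : Type} [Fintype V] [DecidableEq V] (G : SimpleGraph V)
    (d m : ℕ) (E' : Finset (V × V)) (hcard : E'.card = m)
    (hedge : ∀ e ∈ E', G.Adj e.1 e.2 ∧ degOf G e.1 ≤ d ∧ degOf G e.2 ≤ d)
    (hdisj : ∀ e ∈ E', ∀ f ∈ E', e ≠ f →
      e.1 ≠ f.1 ∧ e.1 ≠ f.2 ∧ e.2 ≠ f.1 ∧ e.2 ≠ f.2) :
    1 - Real.exp (-((m : ℝ) * (1 / 8 : ℝ) ^ ((2 : ℝ) ^ (2 * (d : ℝ) - 2)))) ≤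
      probT V (fun ω => ¬ ∃ σ, isPNE G ω σ) := by
  set p : ℝ := (1 / 8 : ℝ) ^ ((2 : ℝ) ^ (2 * (d : ℝ) - 2)) with hpdef
  have hp0 : 0 ≤ p := Real.rpow_nonneg (by norm_num) _
  have hp1 : p ≤ 1 := Real.rpow_le_one (by norm_num) (by norm_num)
    (le_of_lt (Real.rpow_pos_of_pos (by norm_num) _))
  -- each edge in E' is unstable with probability at least p
  have hq : ∀ e ∈ E', p ≤ probT V (Ae G e) := by
    rintro ⟨u, v⟩ he
    obtain ⟨hadj, hdu, hdv⟩ := hedge _ he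
    have hd1 : 1 ≤ d := by
      refine le_trans ?_ hdu
      rw [degOf]
      refine Finset.card_pos.2 ⟨v, ?_⟩
      simp [hadj]
    rw [probT_Ae G hadj]
    -- p = (1/2)^(3 * 2^(2d-2))
    have hpeq : p = (1 / 2 : ℝ) ^ (3 * 2 ^ (2 * d - 2)) := by
      rw [hpdef]
      have h1 : (2 * (d : ℝ) - 2) = ((2 * d - 2 : ℕ) : ℝ) := by
        have : (2:ℕ) ≤ 2 * d := by omega
        push_cast [this]
        ring
      have h2 : ((2:ℝ) ^ ((2 * d - 2 : ℕ) : ℝ)) = ((2 ^ (2 * d - 2) : ℕ) : ℝ) := by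
        rw [Real.rpow_natCast]; push_cast; ring
      rw [h1, h2, Real.rpow_natCast]
      rw [show (1/8 : ℝ) = (1/2 : ℝ) ^ 3 by norm_num, ← pow_mul]
    rw [hpeq]
    have hgen : ∀ k : ℕ, 1 ≤ k → 2 * (1 / 2 : ℝ) ^ k = (1 / 2 : ℝ) ^ (k - 1) := by
      intro k hk
      obtain ⟨j, rfl⟩ : ∃ j, k = j + 1 := ⟨k - 1, by omega⟩
      rw [pow_succ, Nat.add_sub_cancel]
      ring
    have harith : 2 * ((1 / 2 : ℝ) ^ (2 ^ degOf G u) * (1 / 2 : ℝ) ^ (2 ^ degOf G v))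
        = (1 / 2 : ℝ) ^ (2 ^ degOf G u + 2 ^ degOf G v - 1) := by
      rw [← pow_add]
      exact hgen _ (le_trans Nat.one_le_two_pow (Nat.le_add_right _ _))
    rw [harith]
    apply pow_le_pow_of_le_one (by norm_num) (by norm_num)
    -- 2^du + 2^dv - 1 ≤ 3 * 2^(2d-2)
    have hdu2 : 2 ^ degOf G u ≤ 2 ^ d := Nat.pow_le_pow_right (by norm_num) hdu
    have hdv2 : 2 ^ degOf G v ≤ 2 ^ d := Nat.pow_le_pow_right (by norm_num) hdv
    have hkey : 2 * 2 ^ d ≤ 3 * 2 ^ (2 * d - 2) + 1 := by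
      rcases Nat.eq_or_lt_of_le hd1 with h | h
      · subst h; norm_num
      · have hd2 : 2 ≤ d := h
        have hdd : d ≤ 2 * d - 2 := by omega
        have h3 : 2 ^ d ≤ 2 ^ (2 * d - 2) := Nat.pow_le_pow_right (by norm_num) hdd
        calc 2 * 2 ^ d ≤ 3 * 2 ^ d := Nat.mul_le_mul_right _ (by norm_num)
          _ ≤ 3 * 2 ^ (2 * d - 2) := Nat.mul_le_mul_left _ h3
          _ ≤ 3 * 2 ^ (2 * d - 2) + 1 := Nat.le_succ _
    have hsum : 2 ^ degOf G u + 2 ^ degOf G v ≤ 2 * 2 ^ d := by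
      calc 2 ^ degOf G u + 2 ^ degOf G v ≤ 2 ^ d + 2 ^ d := Nat.add_le_add hdu2 hdv2
        _ = 2 * 2 ^ d := (two_mul _).symm
    exact Nat.sub_le_of_le_add (le_trans hsum hkey)
  -- each unstable edge destroys all PNE
  have hmono : probT V (fun ω => ∃ e ∈ E', Ae G e ω) ≤ probT V (fun ω => ¬ ∃ σ, isPNE G ω σ) := by
    refine probT_mono fun ω => ?_
    rintro ⟨e, he, hA⟩
    exact noPNE (hedge e he).1 hA
  have hcompl : probT V (fun ω => ∃ e ∈ E', Ae G e ω)
      = 1 - probT V (fun ω => ∀ e ∈ E', ¬ Ae G e ω) := by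
    rw [← probT_compl (V := V) (fun ω => ∀ e ∈ E', ¬ Ae G e ω)]
    refine probT_iff fun ω => ?_
    push_neg
    tauto
  rw [probT_prod G E' hdisj] at hcompl
  have hprod : ∏ e ∈ E', (1 - probT V (Ae G e)) ≤ (1 - p) ^ m := by
    rw [← hcard, ← Finset.prod_const]
    refine Finset.prod_le_prod (fun e he => ?_) (fun e he => ?_)
    · linarith [probT_le_one (V := V) (Ae G e)]
    · linarith [hq e he]
  have hexp : (1 - p) ^ m ≤ Real.exp (-((m : ℝ) * p)) := by
    have h1 : 1 - p ≤ Real.exp (-p) := by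
      have := Real.add_one_le_exp (-p)
      linarith
    calc (1 - p) ^ m ≤ (Real.exp (-p)) ^ m := pow_le_pow_left₀ (by linarith) h1 m
      _ = Real.exp (-((m : ℝ) * p)) := by
          rw [← Real.exp_nat_mul]
          congr 1
          ring
  linarith [hmono, hcompl, hprod, hexp]
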